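/- For every β ∈ ℤ and all D₁ = (A, h), D₂ = (B, k) ∈ 𝔡, the trace cocycle of the β-twisted operators equals the residue formula: c_Lie(D₁^{(β)}, D₂^{(β)}) = Res( Tr(A·B′) + ((1−2β)/2)·(h″·Tr(B) − k″·Tr(A)) + (n·(1−6β+6β²)/12)·(h‴·k − k‴·h) ), where D^{(β)} denotes the endomorphism v ↦ A·v + h • v′ + β·h′ • v of V for D = (A, h). -/

import Mathlib

noncomputable section

abbrev K : Type := LaurentSeries ℂ

abbrev V (n : ℕ) : Type := Fin n → K

/-- The formal derivative of a Laurent series. -/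
def fd (f : K) : K :=
  ⟨fun k => ((k + 1 : ℤ) : ℂ) * f.coeff (k + 1), by
    apply Set.IsPWO.mono (f.isPWO_support.image_of_monotone
      (f := fun x => x - 1) (fun _ _ h => sub_le_sub_right h 1))
    intro k hk
    have : f.coeff (k + 1) ≠ 0 := by
      intro h
      simp [Function.mem_support, h] at hk
    exact ⟨k + 1, this, by ring⟩⟩

/-- Truncation of a Laurent series to its coefficients in negative degrees: the
projection onto `K₋` along `K₊`. -/
def tneg (f : K) : K :=
  ⟨fun k => if k < 0 then f.coeff k else 0, by
    refine f.isPWO_support.mono (fun k hk => ?_)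
    simp only [Function.mem_support] at hk ⊢
    by_cases h : k < 0
    · simpa [h] using hk
    · simp [h] at hk⟩

/-- Truncation of a Laurent series to its coefficients in non-negative degrees: the
projection onto `K₊` along `K₋`. -/
def tpos (f : K) : K :=
  ⟨fun k => if 0 ≤ k then f.coeff k else 0, by
    refine f.isPWO_support.mono (fun k hk => ?_)
    simp only [Function.mem_support] at hk ⊢
    by_cases h : (0:ℤ) ≤ k
    · simpa [h] using hk
    · simp [h] at hk⟩

/-- Componentwise projection of `V` onto `V₋` along `V₊`. -/
def projM {n : ℕ} (v : V n) : V n := fun i => tneg (v i)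

/-- Componentwise projection of `V` onto `V₊` along `V₋`. -/
def projP {n : ℕ} (v : V n) : V n := fun i => tpos (v i)

/-- The basis vector `z^m · e_i` of `V`. -/
def bas (n : ℕ) (m : ℤ) (i : Fin n) : V n :=
  fun j => if j = i then HahnSeries.single m 1 else 0

/-- `T₁^{+−} ∘ T₂^{−+} − T₂^{+−} ∘ T₁^{−+}` as a map `V₋ → V₋` (evaluated through the
projections onto `V₋` and `V₊`). -/
def commPM {n : ℕ} (T₁ T₂ : V n → V n) (v : V n) : V n :=
  projM (T₁ (projP (T₂ (projM v)))) - projM (T₂ (projP (T₁ (projM v))))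

/-- The trace cocycle `c_Lie(T₁, T₂) = Tr(T₁^{+−} T₂^{−+} − T₂^{+−} T₁^{−+})`, computed
as the (finitely supported) sum of the diagonal coefficients in the basis
`{z^m e_i : m < 0, i}` of `V₋`. -/
def cLie (n : ℕ) (T₁ T₂ : V n → V n) : ℂ :=
  ∑ᶠ (m : ℤ) (_ : m < 0) (i : Fin n), ((commPM T₁ T₂ (bas n m i)) i).coeff m


open LaurentPolynomial

/-- The ring `R = ℂ[z, z⁻¹]` of Laurent polynomials. -/
abbrev Rl : Type := LaurentPolynomial ℂ

/-- The inclusion `R = ℂ[z, z⁻¹] ⊆ K`. -/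
def toK (f : Rl) : K :=
  ⟨fun k => f.coeff k, by
    refine (f.coeff.support.finite_toSet.isPWO).mono (fun k hk => ?_)
    simpa [Finsupp.mem_support_iff] using hk⟩

/-- The residue of a Laurent series: the coefficient of `z⁻¹`. -/
def Res (f : K) : ℂ := f.coeff (-1)

/-- The `β`-twisted operator `D^{(β)} : v ↦ A·v + h • v′ + β·h′ • v` attached to a pair
`D = (A, h) ∈ 𝔡` (`A` a matrix of Laurent polynomials, `h` a Laurent polynomial). -/
def Dop (n : ℕ) (β : ℤ) (D : Matrix (Fin n) (Fin n) Rl × Rl) : V n → V n :=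
  fun v i => (∑ j, toK (D.1 i j) * v j) + toK D.2 * fd (v i) + β • (fd (toK D.2) * v i)

section Aux
open Finset

lemma coeff_sum {ι : Type*} (s : Finset ι) (f : ι → K) (a : ℤ) :
    (∑ x ∈ s, f x).coeff a = ∑ x ∈ s, (f x).coeff a := by
  classical
  induction s using Finset.induction with
  | empty => simp
  | insert _ _ h ih => rw [Finset.sum_insert h, Finset.sum_insert h, HahnSeries.coeff_add, ih]

lemma hahn_eq_sum_single (x : K) (S : Finset ℤ) (hx : ∀ q, x.coeff q ≠ 0 → q ∈ S) :
    x = ∑ q ∈ S, HahnSeries.single q (x.coeff q) := by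
  classical
  ext k
  rw [coeff_sum]
  classical
  have hrw : ∀ q ∈ S, (HahnSeries.single q (x.coeff q)).coeff k
      = if k = q then x.coeff q else 0 := by
    intro q _
    rw [HahnSeries.coeff_single]
    split_ifs with h1 h2 h2 <;> first | rfl | (exfalso; omega)
  rw [Finset.sum_congr rfl hrw, Finset.sum_ite_eq]
  by_cases hk : k ∈ S
  · rw [if_pos hk]
  · have h0 : x.coeff k = 0 := by
      by_contra hcon; exact hk (hx k hcon)
    rw [if_neg hk, h0]

lemma mul_coeff_of_support_subset (x g : K) (S : Finset ℤ)
    (hx : ∀ q, x.coeff q ≠ 0 → q ∈ S) (p : ℤ) :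
    (x * g).coeff p = ∑ q ∈ S, x.coeff q * g.coeff (p - q) := by
  conv_lhs => rw [hahn_eq_sum_single x S hx]
  rw [Finset.sum_mul, coeff_sum]
  refine Finset.sum_congr rfl fun q _ => ?_
  have h := HahnSeries.coeff_single_mul_add (r := x.coeff q) (x := g) (a := p - q) (b := q)
  rw [sub_add_cancel] at h
  exact h

/-- Coefficient extraction as an additive monoid hom. -/
def coeffHom (a : ℤ) : K →+ ℂ where
  toFun x := x.coeff a
  map_zero' := rfl
  map_add' _ _ := HahnSeries.coeff_add

lemma zsmul_coeff (β : ℤ) (x : K) (a : ℤ) : (β • x).coeff a = (β : ℂ) * x.coeff a := by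
  have h := map_zsmul (coeffHom a) β x
  show coeffHom a (β • x) = _
  rw [h, zsmul_eq_mul]
  rfl

lemma mul_single_coeff (x : K) (m : ℤ) (r : ℂ) (p : ℤ) :
    (x * HahnSeries.single m r).coeff p = x.coeff (p - m) * r := by
  have h := HahnSeries.coeff_mul_single_add (r := r) (x := x) (a := p - m) (b := m)
  rw [sub_add_cancel] at h
  exact h

lemma fd_coeff (f : K) (s : ℤ) : (fd f).coeff s = ((s + 1 : ℤ) : ℂ) * f.coeff (s + 1) := rfl

lemma tpos_coeff (f : K) (p : ℤ) : (tpos f).coeff p = if 0 ≤ p then f.coeff p else 0 := rfl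

lemma tneg_coeff (f : K) (p : ℤ) : (tneg f).coeff p = if p < 0 then f.coeff p else 0 := rfl

lemma toK_coeff (f : Rl) (q : ℤ) : (toK f).coeff q = f.coeff q := rfl

lemma fd_zero' : fd (0 : K) = 0 := by
  ext k
  rw [fd_coeff]
  simp

lemma fd_single (m : ℤ) : fd (HahnSeries.single m (1 : ℂ)) = HahnSeries.single (m - 1) ((m : ℤ) : ℂ) := by
  ext k
  rw [fd_coeff, HahnSeries.coeff_single, HahnSeries.coeff_single]
  split_ifs with h1 h2 h2
  · rw [mul_one]; exact_mod_cast congrArg (fun t : ℤ => (t : ℂ)) h1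
  · exfalso; omega
  · exfalso; omega
  · rw [mul_zero]

lemma projM_bas {n : ℕ} (m : ℤ) (hm : m < 0) (i : Fin n) : projM (bas n m i) = bas n m i := by
  funext j
  show tneg (bas n m i j) = bas n m i j
  ext k
  rw [tneg_coeff]
  split_ifs with h
  · rfl
  · show (0 : ℂ) = (bas n m i j).coeff k
    unfold bas
    by_cases hj : j = i
    · have hkm : k ≠ m := by omega
      simp [hj, HahnSeries.coeff_single, hkm]
    · simp [hj]

end Aux
section Aux2
open Finset

/-- Indicator of nonnegative degree. -/
def Pc (p : ℤ) : ℂ := if 0 ≤ p then 1 else 0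

/-- Coefficient function of the image of a basis vector under a twisted operator. -/
def Yf (n : ℕ) (β : ℤ) (b : Fin n → Fin n → ℤ → ℂ) (k : ℤ → ℂ) (m : ℤ) (i j : Fin n)
    (p : ℤ) : ℂ :=
  b j i (p - m) + (if j = i then ((m : ℂ) + (β : ℂ) * (((p : ℤ) : ℂ) - (m : ℂ) + 1)) * k (p - m + 1) else 0)

lemma Dop_bas_coeff (n : ℕ) (β : ℤ) (D : Matrix (Fin n) (Fin n) Rl × Rl) (m : ℤ)
    (i j : Fin n) (p : ℤ) :
    ((Dop n β D (bas n m i)) j).coeff p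
      = Yf n β (fun i' j' q => (D.1 i' j').coeff q) (fun q => D.2.coeff q) m i j p := by
  classical
  unfold Dop Yf
  rw [HahnSeries.coeff_add, HahnSeries.coeff_add, zsmul_coeff, coeff_sum]
  have hpiece1 : ∀ j' : Fin n, (toK (D.1 j j') * bas n m i j').coeff p
      = if j' = i then ((D.1 j j').coeff (p - m) : ℂ) else 0 := by
    intro j'
    unfold bas
    by_cases hj' : j' = i
    · rw [if_pos hj', if_pos hj', mul_single_coeff, mul_one, toK_coeff]
    · rw [if_neg hj', if_neg hj', mul_zero]
      rfl
  rw [Finset.sum_congr rfl (fun j' _ => hpiece1 j'), Finset.sum_ite_eq', if_pos (Finset.mem_univ i)]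
  by_cases hj : j = i
  · have hbas : bas n m i j = HahnSeries.single m 1 := by
      unfold bas; rw [if_pos hj]
    rw [hbas, if_pos hj, fd_single, mul_single_coeff, toK_coeff, mul_single_coeff, mul_one,
      fd_coeff, toK_coeff, show p - (m - 1) = p - m + 1 by ring]
    push_cast
    ring
  · have hbas : bas n m i j = 0 := by
      unfold bas; rw [if_neg hj]
    rw [hbas, if_neg hj, fd_zero', mul_zero, mul_zero, HahnSeries.coeff_zero]
    ring

/-- The expanded expression for one half of the commutator-trace summand. -/
def Xe (n : ℕ) (β : ℤ) (S : Finset ℤ) (a : Fin n → Fin n → ℤ → ℂ) (h : ℤ → ℂ)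
    (b : Fin n → Fin n → ℤ → ℂ) (k : ℤ → ℂ) (m : ℤ) (i : Fin n) : ℂ :=
  ∑ q ∈ S, ((∑ j, a i j q * (Pc (m - q) * Yf n β b k m i j (m - q)))
    + h q * (((m - q + 1 : ℤ) : ℂ) * (Pc (m - q + 1) * Yf n β b k m i i (m - q + 1)))
    + (β : ℂ) * (((q + 1 : ℤ) : ℂ) * h (q + 1) * (Pc (m - q) * Yf n β b k m i i (m - q))))

lemma half_coeff (n : ℕ) (β : ℤ) (D₁ D₂ : Matrix (Fin n) (Fin n) Rl × Rl) (S : Finset ℤ)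
    (h1 : ∀ i j q, (toK (D₁.1 i j)).coeff q ≠ 0 → q ∈ S)
    (h2 : ∀ q, (toK D₁.2).coeff q ≠ 0 → q ∈ S)
    (h3 : ∀ q, (fd (toK D₁.2)).coeff q ≠ 0 → q ∈ S)
    (m : ℤ) (hm : m < 0) (i : Fin n) :
    ((projM (Dop n β D₁ (projP (Dop n β D₂ (projM (bas n m i)))))) i).coeff m
      = Xe n β S (fun i' j' q => (D₁.1 i' j').coeff q) (fun q => D₁.2.coeff q)
          (fun i' j' q => (D₂.1 i' j').coeff q) (fun q => D₂.2.coeff q) m i := by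
  classical
  rw [projM_bas m hm]
  set u : V n := projP (Dop n β D₂ (bas n m i)) with hu_def
  have hu : ∀ (j : Fin n) (p : ℤ), (u j).coeff p
      = Pc p * Yf n β (fun i' j' q => (D₂.1 i' j').coeff q) (fun q => D₂.2.coeff q) m i j p := by
    intro j p
    show (tpos ((Dop n β D₂ (bas n m i)) j)).coeff p = _
    rw [tpos_coeff, Dop_bas_coeff, Pc, boole_mul]
  show (tneg ((Dop n β D₁ u) i)).coeff m = _
  rw [tneg_coeff, if_pos hm]
  show ((∑ j, toK (D₁.1 i j) * u j) + toK D₁.2 * fd (u i) + (β : ℤ) • (fd (toK D₁.2) * u i)).coeff m = _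
  rw [HahnSeries.coeff_add, HahnSeries.coeff_add, zsmul_coeff, coeff_sum]
  have p1 : ∀ j : Fin n, (toK (D₁.1 i j) * u j).coeff m
      = ∑ q ∈ S, ((D₁.1 i j).coeff q : ℂ) * (u j).coeff (m - q) :=
    fun j => mul_coeff_of_support_subset _ _ S (h1 i j) m
  have p2 : (toK D₁.2 * fd (u i)).coeff m = ∑ q ∈ S, (D₁.2.coeff q : ℂ) * (fd (u i)).coeff (m - q) :=
    mul_coeff_of_support_subset _ _ S h2 m
  have p3 : (fd (toK D₁.2) * u i).coeff m
      = ∑ q ∈ S, ((q + 1 : ℤ) : ℂ) * (D₁.2.coeff (q + 1) : ℂ) * (u i).coeff (m - q) := by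
    rw [mul_coeff_of_support_subset _ _ S h3 m]
    exact Finset.sum_congr rfl fun q _ => by rw [fd_coeff, toK_coeff]
  rw [Finset.sum_congr rfl (fun j _ => p1 j), p2, p3, Finset.sum_comm,
    Finset.mul_sum, ← Finset.sum_add_distrib, ← Finset.sum_add_distrib]
  unfold Xe
  refine Finset.sum_congr rfl fun q _ => ?_
  simp only [hu, fd_coeff]
  try simp only [hu]
  try ring

end Aux2
section Aux3
open Finset

lemma Xe_vanish (n : ℕ) (β : ℤ) (M : ℤ) (a : Fin n → Fin n → ℤ → ℂ) (h : ℤ → ℂ)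
    (b : Fin n → Fin n → ℤ → ℂ) (k : ℤ → ℂ) (m : ℤ) (i : Fin n) (hm : m < -(M + 1)) :
    Xe n β (Finset.Icc (-M) M) a h b k m i = 0 := by
  unfold Xe
  refine Finset.sum_eq_zero fun q hq => ?_
  rw [Finset.mem_Icc] at hq
  have hP1 : Pc (m - q) = 0 := by rw [Pc, if_neg (by omega)]
  have hP2 : Pc (m - q + 1) = 0 := by rw [Pc, if_neg (by omega)]
  rw [hP1, hP2]
  simp

lemma step1 (n : ℕ) (β : ℤ) (D₁ D₂ : Matrix (Fin n) (Fin n) Rl × Rl) (M : ℤ)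
    (ha1 : ∀ i j q, (toK (D₁.1 i j)).coeff q ≠ 0 → q ∈ Finset.Icc (-M) M)
    (ha2 : ∀ q, (toK D₁.2).coeff q ≠ 0 → q ∈ Finset.Icc (-M) M)
    (ha3 : ∀ q, (fd (toK D₁.2)).coeff q ≠ 0 → q ∈ Finset.Icc (-M) M)
    (hb1 : ∀ i j q, (toK (D₂.1 i j)).coeff q ≠ 0 → q ∈ Finset.Icc (-M) M)
    (hb2 : ∀ q, (toK D₂.2).coeff q ≠ 0 → q ∈ Finset.Icc (-M) M)
    (hb3 : ∀ q, (fd (toK D₂.2)).coeff q ≠ 0 → q ∈ Finset.Icc (-M) M) :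
    cLie n (Dop n β D₁) (Dop n β D₂)
      = ∑ m ∈ Finset.Icc (-(M + 1)) (-1), ∑ i,
          (Xe n β (Finset.Icc (-M) M) (fun i' j' q => (D₁.1 i' j').coeff q) (fun q => D₁.2.coeff q)
              (fun i' j' q => (D₂.1 i' j').coeff q) (fun q => D₂.2.coeff q) m i
            - Xe n β (Finset.Icc (-M) M) (fun i' j' q => (D₂.1 i' j').coeff q) (fun q => D₂.2.coeff q)
              (fun i' j' q => (D₁.1 i' j').coeff q) (fun q => D₁.2.coeff q) m i) := by
  classical
  have hpt : ∀ m : ℤ, m < 0 → ∀ i : Fin n,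
      ((commPM (Dop n β D₁) (Dop n β D₂) (bas n m i)) i).coeff m
        = Xe n β (Finset.Icc (-M) M) (fun i' j' q => (D₁.1 i' j').coeff q) (fun q => D₁.2.coeff q)
              (fun i' j' q => (D₂.1 i' j').coeff q) (fun q => D₂.2.coeff q) m i
          - Xe n β (Finset.Icc (-M) M) (fun i' j' q => (D₂.1 i' j').coeff q) (fun q => D₂.2.coeff q)
              (fun i' j' q => (D₁.1 i' j').coeff q) (fun q => D₁.2.coeff q) m i := by
    intro m hm i
    unfold commPM
    show ((projM (Dop n β D₁ (projP (Dop n β D₂ (projM (bas n m i)))))) i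
        - (projM (Dop n β D₂ (projP (Dop n β D₁ (projM (bas n m i)))))) i).coeff m = _
    rw [HahnSeries.coeff_sub, half_coeff n β D₁ D₂ _ ha1 ha2 ha3 m hm i,
      half_coeff n β D₂ D₁ _ hb1 hb2 hb3 m hm i]
  unfold cLie
  have h1 : ∀ m : ℤ, (∑ᶠ (_ : m < 0), ∑ᶠ i, ((commPM (Dop n β D₁) (Dop n β D₂) (bas n m i)) i).coeff m)
      = if m < 0 then ∑ i, ((commPM (Dop n β D₁) (Dop n β D₂) (bas n m i)) i).coeff m else 0 := by
    intro m
    rw [finsum_eq_if, finsum_eq_sum_of_fintype]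
  rw [finsum_congr h1]
  rw [finsum_eq_finset_sum_of_support_subset _ (s := Finset.Icc (-(M + 1)) (-1)) ?hsupp]
  case hsupp =>
    intro m hm
    simp only [Function.mem_support] at hm
    by_contra hnot
    apply hm
    by_cases hm0 : m < 0
    · rw [if_pos hm0]
      have hmM : m < -(M + 1) := by
        simp only [Finset.coe_Icc, Set.mem_Icc] at hnot
        omega
      refine Finset.sum_eq_zero fun i _ => ?_
      rw [hpt m hm0 i, Xe_vanish n β M _ _ _ _ m i hmM, Xe_vanish n β M _ _ _ _ m i hmM, sub_zero]
    · rw [if_neg hm0]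
  refine Finset.sum_congr rfl fun m hm => ?_
  rw [Finset.mem_Icc] at hm
  have hm0 : m < 0 := by omega
  rw [if_pos hm0]
  exact Finset.sum_congr rfl fun i _ => hpt m hm0 i

end Aux3
section Aux4
open Finset

/-- Count sums. -/
def cc0 (L q : ℤ) : ℂ := ∑ m ∈ Finset.Icc (-L) (-1), Pc (m - q)
def cc1 (L q : ℤ) : ℂ := ∑ m ∈ Finset.Icc (-L) (-1), Pc (m - q) * (m : ℂ)
def cc2 (L q : ℤ) : ℂ := ∑ m ∈ Finset.Icc (-L) (-1), Pc (m - q) * (m : ℂ) ^ 2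

lemma icc_insert (r : ℕ) :
    Finset.Icc (-((r : ℤ) + 1)) (-1) = insert (-((r : ℤ) + 1)) (Finset.Icc (-(r : ℤ)) (-1)) := by
  ext m
  simp only [Finset.mem_Icc, Finset.mem_insert]
  omega

lemma notmem_icc (r : ℕ) : (-((r : ℤ) + 1)) ∉ Finset.Icc (-(r : ℤ)) (-1) := by
  simp only [Finset.mem_Icc]
  omega

lemma gauss0 (r : ℕ) : ∑ m ∈ Finset.Icc (-(r : ℤ)) (-1), (1 : ℂ) = (r : ℂ) := by
  induction r with
  | zero => rw [show (-(0:ℕ) : ℤ) = 0 by norm_num, Finset.Icc_eq_empty (by omega)]; simp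
  | succ r ih =>
    rw [show (-((r:ℕ)+1:ℕ) : ℤ) = -((r : ℤ) + 1) by push_cast; ring, icc_insert r,
      Finset.sum_insert (notmem_icc r), ih]
    push_cast; ring

lemma gauss1 (r : ℕ) : ∑ m ∈ Finset.Icc (-(r : ℤ)) (-1), (m : ℂ) = -((r : ℂ) ^ 2 + r) / 2 := by
  induction r with
  | zero => rw [show (-(0:ℕ) : ℤ) = 0 by norm_num, Finset.Icc_eq_empty (by omega)]; simp
  | succ r ih =>
    rw [show (-((r:ℕ)+1:ℕ) : ℤ) = -((r : ℤ) + 1) by push_cast; ring, icc_insert r,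
      Finset.sum_insert (notmem_icc r), ih]
    push_cast; ring

lemma gauss2 (r : ℕ) : ∑ m ∈ Finset.Icc (-(r : ℤ)) (-1), (m : ℂ) ^ 2
    = (r : ℂ) * (r + 1) * (2 * r + 1) / 6 := by
  induction r with
  | zero => rw [show (-(0:ℕ) : ℤ) = 0 by norm_num, Finset.Icc_eq_empty (by omega)]; simp
  | succ r ih =>
    rw [show (-((r:ℕ)+1:ℕ) : ℤ) = -((r : ℤ) + 1) by push_cast; ring, icc_insert r,
      Finset.sum_insert (notmem_icc r), ih]
    push_cast; ring

lemma cut_sum (L q : ℤ) (hq : q ≤ 0) (hL : -L ≤ q) (w : ℤ → ℂ) :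
    ∑ m ∈ Finset.Icc (-L) (-1), Pc (m - q) * w m = ∑ m ∈ Finset.Icc q (-1), w m := by
  rw [← Finset.sum_subset (Finset.Icc_subset_Icc hL le_rfl)
    (fun m hm hnot => ?_)]
  · refine Finset.sum_congr rfl fun m hm => ?_
    rw [Finset.mem_Icc] at hm
    rw [Pc, if_pos (by omega), one_mul]
  · rw [Finset.mem_Icc] at hm
    rw [Finset.mem_Icc] at hnot
    rw [Pc, if_neg (by omega), zero_mul]

lemma toNat_trick (q : ℤ) (hq : q ≤ 0) : q = -(((-q).toNat : ℕ) : ℤ) := by omega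

lemma cc0_closed (L q : ℤ) (hL : -L ≤ q) :
    cc0 L q = if q ≤ 0 then -(q : ℂ) else 0 := by
  unfold cc0
  by_cases hq : q ≤ 0
  · rw [if_pos hq]
    have h := cut_sum L q hq hL (fun _ => (1 : ℂ))
    simp only [mul_one] at h
    rw [h, show Finset.Icc q (-1) = Finset.Icc (-(((-q).toNat : ℕ) : ℤ)) (-1) by
        rw [← toNat_trick q hq], gauss0]
    rw [show ((((-q).toNat : ℕ)) : ℂ) = -(q : ℂ) from by
      exact_mod_cast congrArg (Int.cast : ℤ → ℂ) (Int.toNat_of_nonneg (by omega : (0:ℤ) ≤ -q))]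
    try ring
  · rw [if_neg hq]
    refine Finset.sum_eq_zero fun m hm => ?_
    rw [Finset.mem_Icc] at hm
    rw [Pc, if_neg (by omega)]

lemma cc1_closed (L q : ℤ) (hL : -L ≤ q) :
    cc1 L q = if q ≤ 0 then ((q : ℂ) - (q : ℂ) ^ 2) / 2 else 0 := by
  unfold cc1
  by_cases hq : q ≤ 0
  · rw [if_pos hq, cut_sum L q hq hL (fun m => (m : ℂ)),
      show Finset.Icc q (-1) = Finset.Icc (-(((-q).toNat : ℕ) : ℤ)) (-1) by
        rw [← toNat_trick q hq], gauss1]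
    have hcast : ((((-q).toNat : ℕ) : ℂ)) = -(q : ℂ) := by
      exact_mod_cast congrArg (Int.cast : ℤ → ℂ) (Int.toNat_of_nonneg (by omega : (0:ℤ) ≤ -q))
    rw [hcast]
    ring
  · rw [if_neg hq]
    refine Finset.sum_eq_zero fun m hm => ?_
    rw [Finset.mem_Icc] at hm
    rw [Pc, if_neg (by omega), zero_mul]

lemma cc2_closed (L q : ℤ) (hL : -L ≤ q) :
    cc2 L q = if q ≤ 0 then (-(q : ℂ)) * (1 - q) * (1 - 2 * q) / 6 else 0 := by
  unfold cc2
  by_cases hq : q ≤ 0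
  · rw [if_pos hq, cut_sum L q hq hL (fun m => (m : ℂ) ^ 2),
      show Finset.Icc q (-1) = Finset.Icc (-(((-q).toNat : ℕ) : ℤ)) (-1) by
        rw [← toNat_trick q hq], gauss2]
    have hcast : ((((-q).toNat : ℕ) : ℂ)) = -(q : ℂ) := by
      exact_mod_cast congrArg (Int.cast : ℤ → ℂ) (Int.toNat_of_nonneg (by omega : (0:ℤ) ≤ -q))
    rw [hcast]
    ring
  · rw [if_neg hq]
    refine Finset.sum_eq_zero fun m hm => ?_
    rw [Finset.mem_Icc] at hm
    rw [Pc, if_neg (by omega), zero_mul]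

end Aux4
section Aux5
open Finset

lemma sum_reflect (M N₀ t : ℤ) (f : ℤ → ℂ) (hf : ∀ q, f q ≠ 0 → -N₀ ≤ q ∧ q ≤ N₀)
    (h1 : N₀ + t ≤ M) (h2 : N₀ - t ≤ M) :
    ∑ q ∈ Finset.Icc (-M) M, f q = ∑ q ∈ Finset.Icc (-M) M, f (t - q) := by
  have hstep : ∑ q ∈ Finset.Icc (-M) M, f (t - q) = ∑ r ∈ Finset.Icc (t - M) (t + M), f r := by
    refine Finset.sum_nbij' (fun q => t - q) (fun r => t - r) ?_ ?_ ?_ ?_ ?_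
    · intro q hq; simp only [Finset.mem_Icc] at hq ⊢; omega
    · intro r hr; simp only [Finset.mem_Icc] at hr ⊢; omega
    · intro q _; show t - (t - q) = q; ring
    · intro r _; show t - (t - r) = r; ring
    · intro q _; rfl
  rw [hstep]
  have hl : ∑ q ∈ Finset.Icc (-N₀) N₀, f q = ∑ q ∈ Finset.Icc (-M) M, f q := by
    refine Finset.sum_subset (Finset.Icc_subset_Icc (by omega) (by omega)) fun q _ hq => ?_
    by_contra hne
    rcases hf q hne with ⟨hq1, hq2⟩
    exact hq (Finset.mem_Icc.mpr ⟨hq1, hq2⟩)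
  have hr : ∑ q ∈ Finset.Icc (-N₀) N₀, f q = ∑ r ∈ Finset.Icc (t - M) (t + M), f r := by
    refine Finset.sum_subset (Finset.Icc_subset_Icc (by omega) (by omega)) fun q _ hq => ?_
    by_contra hne
    rcases hf q hne with ⟨hq1, hq2⟩
    exact hq (Finset.mem_Icc.mpr ⟨hq1, hq2⟩)
  rw [← hl, hr]

lemma sum_shift (M N₀ t : ℤ) (f : ℤ → ℂ) (hf : ∀ q, f q ≠ 0 → -N₀ ≤ q ∧ q ≤ N₀)
    (h1 : N₀ + t ≤ M) (h2 : N₀ - t ≤ M) :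
    ∑ q ∈ Finset.Icc (-M) M, f q = ∑ q ∈ Finset.Icc (-M) M, f (q + t) := by
  have hstep : ∑ q ∈ Finset.Icc (-M) M, f (q + t) = ∑ r ∈ Finset.Icc (-M + t) (M + t), f r := by
    refine Finset.sum_nbij' (fun q => q + t) (fun r => r - t) ?_ ?_ ?_ ?_ ?_
    · intro q hq; simp only [Finset.mem_Icc] at hq ⊢; omega
    · intro r hr; simp only [Finset.mem_Icc] at hr ⊢; omega
    · intro q _; show q + t - t = q; ring
    · intro r _; show r - t + t = r; ring
    · intro q _; rfl
  rw [hstep]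
  have hl : ∑ q ∈ Finset.Icc (-N₀) N₀, f q = ∑ q ∈ Finset.Icc (-M) M, f q := by
    refine Finset.sum_subset (Finset.Icc_subset_Icc (by omega) (by omega)) fun q _ hq => ?_
    by_contra hne
    rcases hf q hne with ⟨hq1, hq2⟩
    exact hq (Finset.mem_Icc.mpr ⟨hq1, hq2⟩)
  have hr : ∑ q ∈ Finset.Icc (-N₀) N₀, f q = ∑ r ∈ Finset.Icc (-M + t) (M + t), f r := by
    refine Finset.sum_subset (Finset.Icc_subset_Icc (by omega) (by omega)) fun q _ hq => ?_
    by_contra hne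
    rcases hf q hne with ⟨hq1, hq2⟩
    exact hq (Finset.mem_Icc.mpr ⟨hq1, hq2⟩)
  rw [← hl, hr]

lemma id0 (L q : ℤ) (hq : -L ≤ q) (hq' : q ≤ L) :
    cc0 L q - cc0 L (-q) = -(q : ℂ) := by
  rw [cc0_closed L q (by omega), cc0_closed L (-q) (by omega)]
  rcases lt_trichotomy q 0 with h | h | h
  · simp only [if_pos (show q ≤ 0 by omega), if_neg (show ¬(-q ≤ 0) by omega)]
    ring
  · subst h; norm_num
  · simp only [if_neg (show ¬(q ≤ 0) by omega), if_pos (show -q ≤ 0 by omega)]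
    push_cast
    ring

lemma idW (L q : ℤ) (β : ℂ) (hq : -L + 1 ≤ q) (hq' : q ≤ L - 1) :
    cc1 L q + β * (1 - (q : ℂ)) * cc0 L q
      - cc1 L (-q) - (q : ℂ) * cc0 L (-q) - β * (1 - (q : ℂ)) * cc0 L (-q)
    = (1 - 2 * β) / 2 * ((q : ℂ) * (1 - q)) := by
  rw [cc0_closed L q (by omega), cc0_closed L (-q) (by omega),
    cc1_closed L q (by omega), cc1_closed L (-q) (by omega)]
  rcases lt_trichotomy q 0 with h | h | h
  · simp only [if_pos (show q ≤ 0 by omega), if_neg (show ¬(-q ≤ 0) by omega)]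
    push_cast
    ring
  · subst h; norm_num
  · simp only [if_neg (show ¬(q ≤ 0) by omega), if_pos (show -q ≤ 0 by omega)]
    push_cast
    ring

lemma idWhk (L q : ℤ) (β : ℂ) (hq : -L + 1 ≤ q) (hq' : q ≤ L - 1) :
    (cc2 L (q - 1) + (1 - (q : ℂ) + β * (2 - q)) * cc1 L (q - 1)
        + β * (2 - (q : ℂ)) * (1 - q) * cc0 L (q - 1))
      + β * (q : ℂ) * (cc1 L (q - 1) + β * (2 - (q : ℂ)) * cc0 L (q - 1))
      - (cc2 L (1 - q) + ((q : ℂ) - 1 + β * q) * cc1 L (1 - q)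
        + β * (q : ℂ) * ((q : ℂ) - 1) * cc0 L (1 - q))
      - β * (2 - (q : ℂ)) * (cc1 L (1 - q) + β * (q : ℂ) * cc0 L (1 - q))
    = (1 - 6 * β + 6 * β ^ 2) / 6 * ((q : ℂ) * (q - 1) * (q - 2)) := by
  rw [cc0_closed L (q - 1) (by omega), cc0_closed L (1 - q) (by omega),
    cc1_closed L (q - 1) (by omega), cc1_closed L (1 - q) (by omega),
    cc2_closed L (q - 1) (by omega), cc2_closed L (1 - q) (by omega)]
  rcases lt_trichotomy q 1 with h | h | h
  · simp only [if_pos (show q - 1 ≤ 0 by omega), if_neg (show ¬(1 - q ≤ 0) by omega)]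
    push_cast
    ring
  · subst h
    norm_num
  · simp only [if_neg (show ¬(q - 1 ≤ 0) by omega), if_pos (show 1 - q ≤ 0 by omega)]
    push_cast
    ring

end Aux5
section Aux6
open Finset

/-- Trace of a coefficient-matrix function. -/
def trD (n : ℕ) (a : Fin n → Fin n → ℤ → ℂ) (q : ℤ) : ℂ := ∑ i, a i i q

/-- Trace pairing `Σ_{ij} a_{ij}(q) b_{ji}(-q)`. -/
def tpair (n : ℕ) (a b : Fin n → Fin n → ℤ → ℂ) (q : ℤ) : ℂ :=
  ∑ i, ∑ j, a i j q * b j i (-q)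

/-- The result of summing one half over `m` and `i`. -/
def FF (n : ℕ) (β : ℤ) (L : ℤ) (a : Fin n → Fin n → ℤ → ℂ) (h : ℤ → ℂ)
    (b : Fin n → Fin n → ℤ → ℂ) (k : ℤ → ℂ) (q : ℤ) : ℂ :=
  ((0 : ℂ) * cc2 L q
    + (trD n a q * k (1 - q) + (n : ℂ) * ((β : ℂ) * ((q : ℂ) + 1) * h (q + 1) * k (1 - q))) * cc1 L q
    + (tpair n a b q
        + trD n a q * k (1 - q) * ((β : ℂ) * (1 - (q : ℂ)))
        + trD n b (-q) * ((β : ℂ) * ((q : ℂ) + 1) * h (q + 1))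
        + (n : ℂ) * ((β : ℂ) * ((q : ℂ) + 1) * h (q + 1) * k (1 - q)) * ((β : ℂ) * (1 - (q : ℂ))))
      * cc0 L q)
  + ((n : ℂ) * (h q * k (2 - q)) * cc2 L (q - 1)
    + (trD n b (1 - q) * h q
        + (n : ℂ) * (h q * k (2 - q)) * (1 - (q : ℂ) + (β : ℂ) * (2 - (q : ℂ)))) * cc1 L (q - 1)
    + (trD n b (1 - q) * h q * (1 - (q : ℂ))
        + (n : ℂ) * (h q * k (2 - q)) * ((β : ℂ) * (2 - (q : ℂ)) * (1 - (q : ℂ)))) * cc0 L (q - 1))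

lemma msum2 (L c : ℤ) (A B C : ℂ) :
    ∑ m ∈ Finset.Icc (-L) (-1), Pc (m - c) * (A * (m : ℂ) ^ 2 + B * (m : ℂ) + C)
      = A * cc2 L c + B * cc1 L c + C * cc0 L c := by
  unfold cc0 cc1 cc2
  rw [Finset.mul_sum, Finset.mul_sum, Finset.mul_sum, ← Finset.sum_add_distrib,
    ← Finset.sum_add_distrib]
  exact Finset.sum_congr rfl fun m _ => by ring

lemma isum (n : ℕ) (β : ℤ) (a b : Fin n → Fin n → ℤ → ℂ) (h k : ℤ → ℂ) (q m : ℤ) :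
    (∑ i, ((∑ j, a i j q * (Pc (m - q) * Yf n β b k m i j (m - q)))
      + h q * (((m - q + 1 : ℤ) : ℂ) * (Pc (m - q + 1) * Yf n β b k m i i (m - q + 1)))
      + (β : ℂ) * (((q + 1 : ℤ) : ℂ) * h (q + 1) * (Pc (m - q) * Yf n β b k m i i (m - q)))))
    = Pc (m - q) * ((0 : ℂ) * (m : ℂ) ^ 2
        + (trD n a q * k (1 - q) + (n : ℂ) * ((β : ℂ) * ((q : ℂ) + 1) * h (q + 1) * k (1 - q))) * (m : ℂ)
        + (tpair n a b q
            + trD n a q * k (1 - q) * ((β : ℂ) * (1 - (q : ℂ)))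
            + trD n b (-q) * ((β : ℂ) * ((q : ℂ) + 1) * h (q + 1))
            + (n : ℂ) * ((β : ℂ) * ((q : ℂ) + 1) * h (q + 1) * k (1 - q)) * ((β : ℂ) * (1 - (q : ℂ)))))
      + Pc (m - (q - 1)) * ((n : ℂ) * (h q * k (2 - q)) * (m : ℂ) ^ 2
        + (trD n b (1 - q) * h q
            + (n : ℂ) * (h q * k (2 - q)) * (1 - (q : ℂ) + (β : ℂ) * (2 - (q : ℂ)))) * (m : ℂ)
        + (trD n b (1 - q) * h q * (1 - (q : ℂ))
            + (n : ℂ) * (h q * k (2 - q)) * ((β : ℂ) * (2 - (q : ℂ)) * (1 - (q : ℂ))))) := by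
  classical
  have h1 : ∀ i : Fin n,
      ((∑ j, a i j q * (Pc (m - q) * Yf n β b k m i j (m - q)))
        + h q * (((m - q + 1 : ℤ) : ℂ) * (Pc (m - q + 1) * Yf n β b k m i i (m - q + 1)))
        + (β : ℂ) * (((q + 1 : ℤ) : ℂ) * h (q + 1) * (Pc (m - q) * Yf n β b k m i i (m - q))))
      = (∑ j, a i j q * b j i (-q) * Pc (m - q))
        + a i i q * k (1 - q) * (((m : ℂ) + (β : ℂ) * (1 - (q : ℂ))) * Pc (m - q))
        + b i i (1 - q) * h q * ((((m : ℂ) - (q : ℂ) + 1)) * Pc (m - q + 1))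
        + (h q * k (2 - q)) * (((((m : ℂ) - (q : ℂ) + 1)) * ((m : ℂ) + (β : ℂ) * (2 - (q : ℂ)))) * Pc (m - q + 1))
        + b i i (-q) * ((β : ℂ) * ((q : ℂ) + 1) * h (q + 1)) * Pc (m - q)
        + ((β : ℂ) * ((q : ℂ) + 1) * h (q + 1) * k (1 - q)) * (((m : ℂ) + (β : ℂ) * (1 - (q : ℂ))) * Pc (m - q)) := by
    intro i
    unfold Yf
    rw [show m - q - m + 1 = 1 - q by ring, show m - q - m = -q by ring,
      show m - q + 1 - m + 1 = 2 - q by ring, show m - q + 1 - m = 1 - q by ring]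
    simp only [if_pos (rfl : i = i)]
    have hsplit : (∑ j, a i j q * (Pc (m - q) * (b j i (-q)
          + if j = i then ((m : ℂ) + (β : ℂ) * (((m - q : ℤ) : ℂ) - (m : ℂ) + 1)) * k (1 - q) else 0)))
        = (∑ j, a i j q * b j i (-q) * Pc (m - q))
          + a i i q * k (1 - q) * (((m : ℂ) + (β : ℂ) * (1 - (q : ℂ))) * Pc (m - q)) := by
      have e : ∀ j : Fin n, a i j q * (Pc (m - q) * (b j i (-q)
            + if j = i then ((m : ℂ) + (β : ℂ) * (((m - q : ℤ) : ℂ) - (m : ℂ) + 1)) * k (1 - q) else 0))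
          = a i j q * b j i (-q) * Pc (m - q)
            + (if j = i then a i j q * k (1 - q) * (((m : ℂ) + (β : ℂ) * (1 - (q : ℂ))) * Pc (m - q)) else 0) := by
        intro j
        by_cases hj : j = i
        · rw [if_pos hj, if_pos hj]
          push_cast
          ring
        · rw [if_neg hj, if_neg hj]
          ring
      rw [Finset.sum_congr rfl fun j _ => e j, Finset.sum_add_distrib,
        Finset.sum_ite_eq' Finset.univ i, if_pos (Finset.mem_univ i)]
    rw [hsplit]
    push_cast
    ring
  rw [Finset.sum_congr rfl fun i _ => h1 i]
  rw [Finset.sum_add_distrib, Finset.sum_add_distrib, Finset.sum_add_distrib,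
    Finset.sum_add_distrib, Finset.sum_add_distrib]
  have e1 : (∑ i, ∑ j, a i j q * b j i (-q) * Pc (m - q)) = tpair n a b q * Pc (m - q) := by
    unfold tpair
    rw [Finset.sum_mul]
    exact Finset.sum_congr rfl fun i _ => by rw [Finset.sum_mul]
  have e2 : (∑ i, a i i q * k (1 - q) * (((m : ℂ) + (β : ℂ) * (1 - (q : ℂ))) * Pc (m - q)))
      = trD n a q * k (1 - q) * (((m : ℂ) + (β : ℂ) * (1 - (q : ℂ))) * Pc (m - q)) := by
    unfold trD
    rw [Finset.sum_mul, Finset.sum_mul]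
  have e3 : (∑ i, b i i (1 - q) * h q * ((((m : ℂ) - (q : ℂ) + 1)) * Pc (m - q + 1)))
      = trD n b (1 - q) * h q * ((((m : ℂ) - (q : ℂ) + 1)) * Pc (m - q + 1)) := by
    unfold trD
    rw [Finset.sum_mul, Finset.sum_mul]
  have e5 : (∑ i, b i i (-q) * ((β : ℂ) * ((q : ℂ) + 1) * h (q + 1)) * Pc (m - q))
      = trD n b (-q) * ((β : ℂ) * ((q : ℂ) + 1) * h (q + 1)) * Pc (m - q) := by
    unfold trD
    rw [Finset.sum_mul, Finset.sum_mul]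
  have e4 : (∑ _i : Fin n, (h q * k (2 - q)) * (((((m : ℂ) - (q : ℂ) + 1)) * ((m : ℂ) + (β : ℂ) * (2 - (q : ℂ)))) * Pc (m - q + 1)))
      = (n : ℂ) * ((h q * k (2 - q)) * (((((m : ℂ) - (q : ℂ) + 1)) * ((m : ℂ) + (β : ℂ) * (2 - (q : ℂ)))) * Pc (m - q + 1))) := by
    rw [Finset.sum_const, Finset.card_univ, Fintype.card_fin, nsmul_eq_mul]
  have e6 : (∑ _i : Fin n, ((β : ℂ) * ((q : ℂ) + 1) * h (q + 1) * k (1 - q)) * (((m : ℂ) + (β : ℂ) * (1 - (q : ℂ))) * Pc (m - q)))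
      = (n : ℂ) * (((β : ℂ) * ((q : ℂ) + 1) * h (q + 1) * k (1 - q)) * (((m : ℂ) + (β : ℂ) * (1 - (q : ℂ))) * Pc (m - q))) := by
    rw [Finset.sum_const, Finset.card_univ, Fintype.card_fin, nsmul_eq_mul]
  rw [e1, e2, e3, e4, e5, e6, show m - q + 1 = m - (q - 1) by ring]
  ring

lemma stageAB (n : ℕ) (β : ℤ) (M : ℤ)
    (a b : Fin n → Fin n → ℤ → ℂ) (h k : ℤ → ℂ) :
    ∑ m ∈ Finset.Icc (-(M + 1)) (-1), ∑ i, Xe n β (Finset.Icc (-M) M) a h b k m i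
      = ∑ q ∈ Finset.Icc (-M) M, FF n β (M + 1) a h b k q := by
  unfold Xe
  rw [Finset.sum_congr rfl fun m _ => Finset.sum_comm, Finset.sum_comm]
  refine Finset.sum_congr rfl fun q _ => ?_
  rw [Finset.sum_congr rfl fun m _ => isum n β a b h k q m, Finset.sum_add_distrib,
    msum2 (M + 1) q, msum2 (M + 1) (q - 1)]
  rfl

end Aux6
section Aux7
open Finset

/-- The canonical residue-side integrand. -/
def Phi (n : ℕ) (β : ℤ) (a : Fin n → Fin n → ℤ → ℂ) (h : ℤ → ℂ)
    (b : Fin n → Fin n → ℤ → ℂ) (k : ℤ → ℂ) (q : ℤ) : ℂ :=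
  tpair n a b q * (-(q : ℂ))
    + ((1 : ℂ) - 2 * (β : ℂ)) / 2 * ((q : ℂ) * (1 - (q : ℂ)))
        * (trD n a q * k (1 - q) - trD n b q * h (1 - q))
    + (n : ℂ) * ((1 - 6 * (β : ℂ) + 6 * (β : ℂ) ^ 2) / 6)
        * ((q : ℂ) * ((q : ℂ) - 1) * ((q : ℂ) - 2)) * (h q * k (2 - q))

lemma tpair_swap (n : ℕ) (a b : Fin n → Fin n → ℤ → ℂ) (q : ℤ) :
    tpair n b a (-q) = tpair n a b q := by
  unfold tpair
  rw [Finset.sum_comm]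
  refine Finset.sum_congr rfl fun i _ => Finset.sum_congr rfl fun j _ => ?_
  rw [neg_neg]
  ring

lemma tpair_vanish (n : ℕ) (N : ℤ) (a b : Fin n → Fin n → ℤ → ℂ)
    (ha : ∀ i j q, q < -N ∨ N < q → a i j q = 0) (q : ℤ) (hq : q < -N ∨ N < q) :
    tpair n a b q = 0 := by
  unfold tpair
  exact Finset.sum_eq_zero fun i _ => Finset.sum_eq_zero fun j _ => by
    rw [ha i j q hq, zero_mul]

lemma trD_vanish (n : ℕ) (N : ℤ) (a : Fin n → Fin n → ℤ → ℂ)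
    (ha : ∀ i j q, q < -N ∨ N < q → a i j q = 0) (q : ℤ) (hq : q < -N ∨ N < q) :
    trD n a q = 0 :=
  Finset.sum_eq_zero fun i _ => ha i i q hq

lemma r1 (n : ℕ) (N M : ℤ) (hN : 0 ≤ N) (hM : N + 3 ≤ M)
    (a b : Fin n → Fin n → ℤ → ℂ)
    (hb : ∀ i j q, q < -N ∨ N < q → b i j q = 0) :
    ∑ q ∈ Finset.Icc (-M) M, tpair n b a q * cc0 (M + 1) q
      = ∑ q ∈ Finset.Icc (-M) M, tpair n a b q * cc0 (M + 1) (-q) := by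
  refine (sum_reflect M (N + 1) 0 (fun q => tpair n b a q * cc0 (M + 1) q) ?_ (by omega)
    (by omega)).trans ?_
  · intro q hq
    by_contra hcon
    push_neg at hcon
    apply hq
    simp [tpair_vanish n N b a hb q (by omega)]
  · refine Finset.sum_congr rfl fun q _ => ?_
    show tpair n b a (0 - q) * cc0 (M + 1) (0 - q) = _
    rw [show (0 : ℤ) - q = -q by ring, tpair_swap]

lemma r_cross (n : ℕ) (N M : ℤ) (hN : 0 ≤ N) (hM : N + 3 ≤ M)
    (u w : ℤ → ℂ) (hw : ∀ q, q < -N ∨ N < q → w q = 0) :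
    ∑ q ∈ Finset.Icc (-M) M, u (1 - q) * w q * (cc1 (M + 1) (q - 1) + (1 - (q : ℂ)) * cc0 (M + 1) (q - 1))
      = ∑ q ∈ Finset.Icc (-M) M, u q * w (1 - q) * (cc1 (M + 1) (-q) + (q : ℂ) * cc0 (M + 1) (-q)) := by
  refine (sum_reflect M (N + 1) 1
    (fun q => u (1 - q) * w q * (cc1 (M + 1) (q - 1) + (1 - (q : ℂ)) * cc0 (M + 1) (q - 1)))
    ?_ (by omega) (by omega)).trans ?_
  · intro q hq
    by_contra hcon
    push_neg at hcon
    apply hq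
    simp [hw q (by omega)]
  · refine Finset.sum_congr rfl fun q _ => ?_
    show u (1 - (1 - q)) * w (1 - q)
        * (cc1 (M + 1) ((1 - q) - 1) + (1 - ((1 - q : ℤ) : ℂ)) * cc0 (M + 1) ((1 - q) - 1)) = _
    rw [show 1 - (1 - q) = q by ring, show (1 - q) - 1 = -q by ring]
    push_cast
    ring

lemma r_cross2 (n : ℕ) (N M : ℤ) (β : ℤ) (hN : 0 ≤ N) (hM : N + 3 ≤ M)
    (u w : ℤ → ℂ) (hw : ∀ q, q < -N ∨ N < q → w q = 0) :
    ∑ q ∈ Finset.Icc (-M) M, u (-q) * ((β : ℂ) * ((q : ℂ) + 1) * w (q + 1)) * cc0 (M + 1) q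
      = ∑ q ∈ Finset.Icc (-M) M, u q * ((β : ℂ) * (1 - (q : ℂ)) * w (1 - q)) * cc0 (M + 1) (-q) := by
  refine (sum_reflect M (N + 1) 0
    (fun q => u (-q) * ((β : ℂ) * ((q : ℂ) + 1) * w (q + 1)) * cc0 (M + 1) q)
    ?_ (by omega) (by omega)).trans ?_
  · intro q hq
    by_contra hcon
    push_neg at hcon
    apply hq
    simp [hw (q + 1) (by omega)]
  · refine Finset.sum_congr rfl fun q _ => ?_
    show u (-(0 - q)) * ((β : ℂ) * (((0 - q : ℤ) : ℂ) + 1) * w ((0 - q) + 1)) * cc0 (M + 1) (0 - q) = _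
    rw [show -(0 - q) = q by ring, show (0 - q) + 1 = 1 - q by ring, show (0 : ℤ) - q = -q by ring]
    push_cast
    ring

lemma r5gen (n : ℕ) (N M : ℤ) (β : ℤ) (hN : 0 ≤ N) (hM : N + 3 ≤ M)
    (w₁ w₂ : ℤ → ℂ) (hw : ∀ q, q < -N ∨ N < q → w₁ q = 0) :
    ∑ q ∈ Finset.Icc (-M) M, (n : ℂ) * ((β : ℂ) * ((q : ℂ) + 1) * w₁ (q + 1) * w₂ (1 - q))
        * (cc1 (M + 1) q + (β : ℂ) * (1 - (q : ℂ)) * cc0 (M + 1) q)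
      = ∑ q ∈ Finset.Icc (-M) M, (n : ℂ) * ((β : ℂ) * (q : ℂ) * w₁ q * w₂ (2 - q))
        * (cc1 (M + 1) (q - 1) + (β : ℂ) * (2 - (q : ℂ)) * cc0 (M + 1) (q - 1)) := by
  refine (sum_shift M (N + 1) (-1)
    (fun q => (n : ℂ) * ((β : ℂ) * ((q : ℂ) + 1) * w₁ (q + 1) * w₂ (1 - q))
      * (cc1 (M + 1) q + (β : ℂ) * (1 - (q : ℂ)) * cc0 (M + 1) q))
    ?_ (by omega) (by omega)).trans ?_
  · intro q hq
    by_contra hcon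
    push_neg at hcon
    apply hq
    simp [hw (q + 1) (by omega)]
  · refine Finset.sum_congr rfl fun q _ => ?_
    show (n : ℂ) * ((β : ℂ) * (((q + -1 : ℤ) : ℂ) + 1) * w₁ ((q + -1) + 1) * w₂ (1 - (q + -1)))
        * (cc1 (M + 1) (q + -1) + (β : ℂ) * (1 - ((q + -1 : ℤ) : ℂ)) * cc0 (M + 1) (q + -1)) = _
    rw [show (q + -1) + 1 = q by ring, show 1 - (q + -1) = 2 - q by ring,
      show q + -1 = q - 1 by ring]
    push_cast
    ring

lemma r6 (n : ℕ) (N M : ℤ) (β : ℤ) (hN : 0 ≤ N) (hM : N + 3 ≤ M)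
    (w₁ w₂ : ℤ → ℂ) (hw : ∀ q, q < -N ∨ N < q → w₁ q = 0) :
    ∑ q ∈ Finset.Icc (-M) M, (n : ℂ) * (w₁ q * w₂ (2 - q))
        * (cc2 (M + 1) (q - 1) + (1 - (q : ℂ) + (β : ℂ) * (2 - (q : ℂ))) * cc1 (M + 1) (q - 1)
          + (β : ℂ) * (2 - (q : ℂ)) * (1 - (q : ℂ)) * cc0 (M + 1) (q - 1))
      = ∑ q ∈ Finset.Icc (-M) M, (n : ℂ) * (w₁ (2 - q) * w₂ q)
        * (cc2 (M + 1) (1 - q) + ((q : ℂ) - 1 + (β : ℂ) * (q : ℂ)) * cc1 (M + 1) (1 - q)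
          + (β : ℂ) * (q : ℂ) * ((q : ℂ) - 1) * cc0 (M + 1) (1 - q)) := by
  refine (sum_reflect M (N + 1) 2
    (fun q => (n : ℂ) * (w₁ q * w₂ (2 - q))
      * (cc2 (M + 1) (q - 1) + (1 - (q : ℂ) + (β : ℂ) * (2 - (q : ℂ))) * cc1 (M + 1) (q - 1)
        + (β : ℂ) * (2 - (q : ℂ)) * (1 - (q : ℂ)) * cc0 (M + 1) (q - 1)))
    ?_ (by omega) (by omega)).trans ?_
  · intro q hq
    by_contra hcon
    push_neg at hcon
    apply hq
    simp [hw q (by omega)]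
  · refine Finset.sum_congr rfl fun q _ => ?_
    show (n : ℂ) * (w₁ (2 - q) * w₂ (2 - (2 - q)))
        * (cc2 (M + 1) ((2 - q) - 1) + (1 - ((2 - q : ℤ) : ℂ) + (β : ℂ) * (2 - ((2 - q : ℤ) : ℂ))) * cc1 (M + 1) ((2 - q) - 1)
          + (β : ℂ) * (2 - ((2 - q : ℤ) : ℂ)) * (1 - ((2 - q : ℤ) : ℂ)) * cc0 (M + 1) ((2 - q) - 1)) = _
    rw [show 2 - (2 - q) = q by ring, show (2 - q) - 1 = 1 - q by ring]
    push_cast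
    ring

lemma r7b (n : ℕ) (N M : ℤ) (β : ℤ) (hN : 0 ≤ N) (hM : N + 3 ≤ M)
    (w₁ w₂ : ℤ → ℂ) (hw : ∀ q, q < -N ∨ N < q → w₁ q = 0) :
    ∑ q ∈ Finset.Icc (-M) M, (n : ℂ) * ((β : ℂ) * (q : ℂ) * w₁ q * w₂ (2 - q))
        * (cc1 (M + 1) (q - 1) + (β : ℂ) * (2 - (q : ℂ)) * cc0 (M + 1) (q - 1))
      = ∑ q ∈ Finset.Icc (-M) M, (n : ℂ) * ((β : ℂ) * (2 - (q : ℂ)) * w₁ (2 - q) * w₂ q)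
        * (cc1 (M + 1) (1 - q) + (β : ℂ) * (q : ℂ) * cc0 (M + 1) (1 - q)) := by
  refine (sum_reflect M (N + 1) 2
    (fun q => (n : ℂ) * ((β : ℂ) * (q : ℂ) * w₁ q * w₂ (2 - q))
      * (cc1 (M + 1) (q - 1) + (β : ℂ) * (2 - (q : ℂ)) * cc0 (M + 1) (q - 1)))
    ?_ (by omega) (by omega)).trans ?_
  · intro q hq
    by_contra hcon
    push_neg at hcon
    apply hq
    simp [hw q (by omega)]
  · refine Finset.sum_congr rfl fun q _ => ?_
    show (n : ℂ) * ((β : ℂ) * ((2 - q : ℤ) : ℂ) * w₁ (2 - q) * w₂ (2 - (2 - q)))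
        * (cc1 (M + 1) ((2 - q) - 1) + (β : ℂ) * (2 - ((2 - q : ℤ) : ℂ)) * cc0 (M + 1) ((2 - q) - 1)) = _
    rw [show 2 - (2 - q) = q by ring, show (2 - q) - 1 = 1 - q by ring]
    push_cast
    ring

end Aux7
section Aux8
open Finset

lemma stageC (n : ℕ) (β : ℤ) (N M : ℤ) (hN : 0 ≤ N) (hM : N + 3 ≤ M)
    (a b : Fin n → Fin n → ℤ → ℂ) (h k : ℤ → ℂ)
    (ha : ∀ i j q, q < -N ∨ N < q → a i j q = 0)
    (hb : ∀ i j q, q < -N ∨ N < q → b i j q = 0)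
    (hh : ∀ q, q < -N ∨ N < q → h q = 0)
    (hk : ∀ q, q < -N ∨ N < q → k q = 0) :
    ∑ q ∈ Finset.Icc (-M) M, (FF n β (M + 1) a h b k q - FF n β (M + 1) b k a h q)
      = ∑ q ∈ Finset.Icc (-M) M, Phi n β a h b k q := by
  rw [Finset.sum_sub_distrib]
  have h₁ : ∑ q ∈ Finset.Icc (-M) M, FF n β (M + 1) a h b k q
      = (∑ q ∈ Finset.Icc (-M) M, tpair n a b q * cc0 (M + 1) q)
      + (∑ q ∈ Finset.Icc (-M) M, trD n a q * k (1 - q) * (cc1 (M + 1) q + (β : ℂ) * (1 - (q : ℂ)) * cc0 (M + 1) q))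
      + (∑ q ∈ Finset.Icc (-M) M, trD n b (1 - q) * h q * (cc1 (M + 1) (q - 1) + (1 - (q : ℂ)) * cc0 (M + 1) (q - 1)))
      + (∑ q ∈ Finset.Icc (-M) M, trD n b (-q) * ((β : ℂ) * ((q : ℂ) + 1) * h (q + 1)) * cc0 (M + 1) q)
      + (∑ q ∈ Finset.Icc (-M) M, (n : ℂ) * (h q * k (2 - q)) * (cc2 (M + 1) (q - 1) + (1 - (q : ℂ) + (β : ℂ) * (2 - (q : ℂ))) * cc1 (M + 1) (q - 1) + (β : ℂ) * (2 - (q : ℂ)) * (1 - (q : ℂ)) * cc0 (M + 1) (q - 1)))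
      + (∑ q ∈ Finset.Icc (-M) M, (n : ℂ) * ((β : ℂ) * ((q : ℂ) + 1) * h (q + 1) * k (1 - q)) * (cc1 (M + 1) q + (β : ℂ) * (1 - (q : ℂ)) * cc0 (M + 1) q)) := by
    rw [← Finset.sum_add_distrib, ← Finset.sum_add_distrib, ← Finset.sum_add_distrib,
      ← Finset.sum_add_distrib, ← Finset.sum_add_distrib]
    refine Finset.sum_congr rfl fun q _ => ?_
    unfold FF
    ring
  have h₂ : ∑ q ∈ Finset.Icc (-M) M, FF n β (M + 1) b k a h q
      = (∑ q ∈ Finset.Icc (-M) M, tpair n b a q * cc0 (M + 1) q)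
      + (∑ q ∈ Finset.Icc (-M) M, trD n b q * h (1 - q) * (cc1 (M + 1) q + (β : ℂ) * (1 - (q : ℂ)) * cc0 (M + 1) q))
      + (∑ q ∈ Finset.Icc (-M) M, trD n a (1 - q) * k q * (cc1 (M + 1) (q - 1) + (1 - (q : ℂ)) * cc0 (M + 1) (q - 1)))
      + (∑ q ∈ Finset.Icc (-M) M, trD n a (-q) * ((β : ℂ) * ((q : ℂ) + 1) * k (q + 1)) * cc0 (M + 1) q)
      + (∑ q ∈ Finset.Icc (-M) M, (n : ℂ) * (k q * h (2 - q)) * (cc2 (M + 1) (q - 1) + (1 - (q : ℂ) + (β : ℂ) * (2 - (q : ℂ))) * cc1 (M + 1) (q - 1) + (β : ℂ) * (2 - (q : ℂ)) * (1 - (q : ℂ)) * cc0 (M + 1) (q - 1)))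
      + (∑ q ∈ Finset.Icc (-M) M, (n : ℂ) * ((β : ℂ) * ((q : ℂ) + 1) * k (q + 1) * h (1 - q)) * (cc1 (M + 1) q + (β : ℂ) * (1 - (q : ℂ)) * cc0 (M + 1) q)) := by
    rw [← Finset.sum_add_distrib, ← Finset.sum_add_distrib, ← Finset.sum_add_distrib,
      ← Finset.sum_add_distrib, ← Finset.sum_add_distrib]
    refine Finset.sum_congr rfl fun q _ => ?_
    unfold FF
    ring
  rw [h₁, h₂]
  rw [r_cross n N M hN hM (trD n b) h hh, r_cross2 n N M β hN hM (trD n b) h hh,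
    r5gen n N M β hN hM h k hh]
  rw [r1 n N M hN hM a b hb, r_cross n N M hN hM (trD n a) k hk,
    r_cross2 n N M β hN hM (trD n a) k hk, r6 n N M β hN hM k h hk,
    r5gen n N M β hN hM k h hk, r7b n N M β hN hM k h hk]
  rw [← Finset.sum_add_distrib, ← Finset.sum_add_distrib, ← Finset.sum_add_distrib,
    ← Finset.sum_add_distrib, ← Finset.sum_add_distrib, ← Finset.sum_add_distrib,
    ← Finset.sum_add_distrib, ← Finset.sum_add_distrib, ← Finset.sum_add_distrib,
    ← Finset.sum_add_distrib, ← Finset.sum_sub_distrib]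
  refine Finset.sum_congr rfl fun q hq => ?_
  rw [Finset.mem_Icc] at hq
  unfold Phi
  linear_combination (tpair n a b q) * id0 (M + 1) q (by omega) (by omega)
    + (trD n a q * k (1 - q) - trD n b q * h (1 - q)) * idW (M + 1) q (β : ℂ) (by omega) (by omega)
    + ((n : ℂ) * (h q * k (2 - q))) * idWhk (M + 1) q (β : ℂ) (by omega) (by omega)

end Aux8
section Aux9
open Finset

lemma csmul_coeff (c : ℂ) (x : K) (a : ℤ) : (c • x).coeff a = c * x.coeff a := rfl

lemma fdfd_coeff (x : K) (q : ℤ) :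
    (fd (fd x)).coeff q = ((q + 1 : ℤ) : ℂ) * ((q + 2 : ℤ) : ℂ) * x.coeff (q + 2) := by
  rw [fd_coeff, fd_coeff, show q + 1 + 1 = q + 2 by ring]
  ring

lemma fdfdfd_coeff (x : K) (q : ℤ) :
    (fd (fd (fd x))).coeff q
      = ((q + 1 : ℤ) : ℂ) * ((q + 2 : ℤ) : ℂ) * ((q + 3 : ℤ) : ℂ) * x.coeff (q + 3) := by
  rw [fd_coeff, fdfd_coeff, show q + 1 + 2 = q + 3 by ring]
  push_cast
  ring

lemma step2 (n : ℕ) (β : ℤ) (N M : ℤ) (hN : 0 ≤ N) (hM : N + 6 ≤ M)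
    (D₁ D₂ : Matrix (Fin n) (Fin n) Rl × Rl)
    (ha : ∀ i j q, q < -N ∨ N < q → (D₁.1 i j).coeff q = 0)
    (hb : ∀ i j q, q < -N ∨ N < q → (D₂.1 i j).coeff q = 0)
    (hh : ∀ q, q < -N ∨ N < q → D₁.2.coeff q = 0)
    (hk : ∀ q, q < -N ∨ N < q → D₂.2.coeff q = 0) :
    Res ((∑ i, ∑ j, toK (D₁.1 i j) * fd (toK (D₂.1 j i)))
        + (((1 : ℂ) - 2 * (β : ℂ)) / 2) •
            (fd (fd (toK D₁.2)) * (∑ i, toK (D₂.1 i i))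
              - fd (fd (toK D₂.2)) * (∑ i, toK (D₁.1 i i)))
        + (((n : ℂ) * (1 - 6 * (β : ℂ) + 6 * (β : ℂ) ^ 2)) / 12) •
            (fd (fd (fd (toK D₁.2))) * toK D₂.2
              - fd (fd (fd (toK D₂.2))) * toK D₁.2))
      = ∑ q ∈ Finset.Icc (-M) M, Phi n β (fun i' j' q' => (D₁.1 i' j').coeff q') (fun q' => D₁.2.coeff q')
          (fun i' j' q' => (D₂.1 i' j').coeff q') (fun q' => D₂.2.coeff q') q := by
  unfold Res
  rw [HahnSeries.coeff_add, HahnSeries.coeff_add, csmul_coeff, csmul_coeff,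
    HahnSeries.coeff_sub, HahnSeries.coeff_sub, coeff_sum]
  -- Piece 1
  have hP1 : ∀ i : Fin n, (∑ j, toK (D₁.1 i j) * fd (toK (D₂.1 j i))).coeff (-1)
      = ∑ j, ∑ q ∈ Finset.Icc (-M) M, ((D₁.1 i j).coeff q : ℂ) * (((-q : ℤ) : ℂ) * (D₂.1 j i).coeff (-q)) := by
    intro i
    rw [coeff_sum]
    refine Finset.sum_congr rfl fun j _ => ?_
    rw [mul_coeff_of_support_subset _ _ (Finset.Icc (-M) M) (fun q hq => by
      rw [Finset.mem_Icc]
      by_contra hcon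
      exact hq (by rw [toK_coeff]; exact ha i j q (by omega)) ) (-1)]
    refine Finset.sum_congr rfl fun q _ => ?_
    rw [fd_coeff, toK_coeff, toK_coeff, show -1 - q + 1 = -q by ring]
  rw [Finset.sum_congr rfl fun i _ => hP1 i]
  -- Piece 2 and 3 (fd ∘ fd)
  have hP2 : (fd (fd (toK D₁.2)) * (∑ i, toK (D₂.1 i i))).coeff (-1)
      = ∑ q ∈ Finset.Icc (-M) M,
          (((q + 1 : ℤ) : ℂ) * ((q + 2 : ℤ) : ℂ) * D₁.2.coeff (q + 2)) * trD n (fun i' j' q' => (D₂.1 i' j').coeff q') (-1 - q) := by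
    rw [mul_coeff_of_support_subset _ _ (Finset.Icc (-M) M) (fun q hq => by
      rw [Finset.mem_Icc]
      by_contra hcon
      apply hq
      rw [fdfd_coeff, toK_coeff, hh (q + 2) (by omega), mul_zero]) (-1)]
    refine Finset.sum_congr rfl fun q _ => ?_
    rw [fdfd_coeff, toK_coeff, coeff_sum]
    rfl
  have hP3 : (fd (fd (toK D₂.2)) * (∑ i, toK (D₁.1 i i))).coeff (-1)
      = ∑ q ∈ Finset.Icc (-M) M,
          (((q + 1 : ℤ) : ℂ) * ((q + 2 : ℤ) : ℂ) * D₂.2.coeff (q + 2)) * trD n (fun i' j' q' => (D₁.1 i' j').coeff q') (-1 - q) := by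
    rw [mul_coeff_of_support_subset _ _ (Finset.Icc (-M) M) (fun q hq => by
      rw [Finset.mem_Icc]
      by_contra hcon
      apply hq
      rw [fdfd_coeff, toK_coeff, hk (q + 2) (by omega), mul_zero]) (-1)]
    refine Finset.sum_congr rfl fun q _ => ?_
    rw [fdfd_coeff, toK_coeff, coeff_sum]
    rfl
  -- Piece 4 and 5 (fd ∘ fd ∘ fd)
  have hP4 : (fd (fd (fd (toK D₁.2))) * toK D₂.2).coeff (-1)
      = ∑ q ∈ Finset.Icc (-M) M,
          (((q + 1 : ℤ) : ℂ) * ((q + 2 : ℤ) : ℂ) * ((q + 3 : ℤ) : ℂ) * D₁.2.coeff (q + 3)) * D₂.2.coeff (-1 - q) := by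
    rw [mul_coeff_of_support_subset _ _ (Finset.Icc (-M) M) (fun q hq => by
      rw [Finset.mem_Icc]
      by_contra hcon
      apply hq
      rw [fdfdfd_coeff, toK_coeff, hh (q + 3) (by omega), mul_zero]) (-1)]
    refine Finset.sum_congr rfl fun q _ => ?_
    rw [fdfdfd_coeff, toK_coeff, toK_coeff]
  have hP5 : (fd (fd (fd (toK D₂.2))) * toK D₁.2).coeff (-1)
      = ∑ q ∈ Finset.Icc (-M) M,
          (((q + 1 : ℤ) : ℂ) * ((q + 2 : ℤ) : ℂ) * ((q + 3 : ℤ) : ℂ) * D₂.2.coeff (q + 3)) * D₁.2.coeff (-1 - q) := by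
    rw [mul_coeff_of_support_subset _ _ (Finset.Icc (-M) M) (fun q hq => by
      rw [Finset.mem_Icc]
      by_contra hcon
      apply hq
      rw [fdfdfd_coeff, toK_coeff, hk (q + 3) (by omega), mul_zero]) (-1)]
    refine Finset.sum_congr rfl fun q _ => ?_
    rw [fdfdfd_coeff, toK_coeff, toK_coeff]
  rw [hP2, hP3, hP4, hP5]
  -- reindex piece 1 : swap sums
  rw [Finset.sum_congr rfl fun i (_ : i ∈ Finset.univ) => Finset.sum_comm, Finset.sum_comm]
  -- reindex pieces 2,3 by reflection t = -1
  have r2 : ∀ (w : ℤ → ℂ) (v : Fin n → Fin n → ℤ → ℂ), (∀ q, q < -N ∨ N < q → w q = 0) →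
      (∀ i j q, q < -N ∨ N < q → v i j q = 0) →
      ∑ q ∈ Finset.Icc (-M) M, (((q + 1 : ℤ) : ℂ) * ((q + 2 : ℤ) : ℂ) * w (q + 2)) * trD n v (-1 - q)
      = ∑ q ∈ Finset.Icc (-M) M, ((-(q : ℂ)) * (1 - (q : ℂ)) * w (1 - q)) * trD n v q := by
    intro w v hw hv
    refine (sum_reflect M (N + 2) (-1)
      (fun q => (((q + 1 : ℤ) : ℂ) * ((q + 2 : ℤ) : ℂ) * w (q + 2)) * trD n v (-1 - q))
      ?_ (by omega) (by omega)).trans ?_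
    · intro q hq
      by_contra hcon
      push_neg at hcon
      apply hq
      simp [hw (q + 2) (by omega)]
    · refine Finset.sum_congr rfl fun q _ => ?_
      show ((((-1 - q) + 1 : ℤ) : ℂ) * (((-1 - q) + 2 : ℤ) : ℂ) * w ((-1 - q) + 2)) * trD n v (-1 - (-1 - q)) = _
      rw [show (-1 - q) + 2 = 1 - q by ring, show (-1 - q) + 1 = -q by ring,
        show -1 - (-1 - q) = q by ring]
      push_cast
      ring
  rw [r2 (fun q' => D₁.2.coeff q') (fun i' j' q' => (D₂.1 i' j').coeff q') hh hb,
    r2 (fun q' => D₂.2.coeff q') (fun i' j' q' => (D₁.1 i' j').coeff q') hk ha]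
  -- reindex piece 4 by shift t = -3
  have r4 : ∑ q ∈ Finset.Icc (-M) M,
        (((q + 1 : ℤ) : ℂ) * ((q + 2 : ℤ) : ℂ) * ((q + 3 : ℤ) : ℂ) * D₁.2.coeff (q + 3)) * D₂.2.coeff (-1 - q)
      = ∑ q ∈ Finset.Icc (-M) M,
        ((((q : ℂ) - 2)) * ((q : ℂ) - 1) * (q : ℂ) * D₁.2.coeff q) * D₂.2.coeff (2 - q) := by
    refine (sum_shift M (N + 3) (-3)
      (fun q => (((q + 1 : ℤ) : ℂ) * ((q + 2 : ℤ) : ℂ) * ((q + 3 : ℤ) : ℂ) * D₁.2.coeff (q + 3)) * D₂.2.coeff (-1 - q))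
      ?_ (by omega) (by omega)).trans ?_
    · intro q hq
      by_contra hcon
      push_neg at hcon
      apply hq
      simp [hh (q + 3) (by omega)]
    · refine Finset.sum_congr rfl fun q _ => ?_
      show ((((q + -3) + 1 : ℤ) : ℂ) * (((q + -3) + 2 : ℤ) : ℂ) * (((q + -3) + 3 : ℤ) : ℂ) * D₁.2.coeff ((q + -3) + 3)) * D₂.2.coeff (-1 - (q + -3)) = _
      rw [show (q + -3) + 3 = q by ring, show -1 - (q + -3) = 2 - q by ring,
        show (q + -3) + 1 = q - 2 by ring, show (q + -3) + 2 = q - 1 by ring]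
      push_cast
      ring
  -- reindex piece 5 by reflection t = -1
  have r5' : ∑ q ∈ Finset.Icc (-M) M,
        (((q + 1 : ℤ) : ℂ) * ((q + 2 : ℤ) : ℂ) * ((q + 3 : ℤ) : ℂ) * D₂.2.coeff (q + 3)) * D₁.2.coeff (-1 - q)
      = ∑ q ∈ Finset.Icc (-M) M,
        ((-(q : ℂ)) * (1 - (q : ℂ)) * (2 - (q : ℂ)) * D₂.2.coeff (2 - q)) * D₁.2.coeff q := by
    refine (sum_reflect M (N + 3) (-1)
      (fun q => (((q + 1 : ℤ) : ℂ) * ((q + 2 : ℤ) : ℂ) * ((q + 3 : ℤ) : ℂ) * D₂.2.coeff (q + 3)) * D₁.2.coeff (-1 - q))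
      ?_ (by omega) (by omega)).trans ?_
    · intro q hq
      by_contra hcon
      push_neg at hcon
      apply hq
      simp [hk (q + 3) (by omega)]
    · refine Finset.sum_congr rfl fun q _ => ?_
      show ((((-1 - q) + 1 : ℤ) : ℂ) * (((-1 - q) + 2 : ℤ) : ℂ) * (((-1 - q) + 3 : ℤ) : ℂ) * D₂.2.coeff ((-1 - q) + 3)) * D₁.2.coeff (-1 - (-1 - q)) = _
      rw [show (-1 - q) + 3 = 2 - q by ring, show (-1 - q) + 1 = -q by ring,
        show (-1 - q) + 2 = 1 - q by ring, show -1 - (-1 - q) = q by ring]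
      push_cast
      ring
  rw [r4, r5']
  -- assemble
  rw [← Finset.sum_sub_distrib, ← Finset.sum_sub_distrib, Finset.mul_sum, Finset.mul_sum,
    ← Finset.sum_add_distrib, ← Finset.sum_add_distrib]
  refine Finset.sum_congr rfl fun q _ => ?_
  simp only [Phi, tpair, trD]
  have e : (∑ i, ∑ j, ((D₁.1 i j).coeff q : ℂ) * ((((-q : ℤ)) : ℂ) * (D₂.1 j i).coeff (-q)))
      = (∑ i, ∑ j, ((D₁.1 i j).coeff q : ℂ) * (D₂.1 j i).coeff (-q)) * (-(q : ℂ)) := by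
    rw [Finset.sum_mul]
    refine Finset.sum_congr rfl fun i _ => ?_
    rw [Finset.sum_mul]
    refine Finset.sum_congr rfl fun j _ => ?_
    push_cast
    ring
  rw [e]
  push_cast
  ring

end Aux9
/-- The trace cocycle of two `β`-twisted first-order operators is given by the residue
formula
`c_Lie(D₁^{(β)}, D₂^{(β)}) = Res( Tr(A·B′) + ((1−2β)/2)(h″·Tr B − k″·Tr A) + (n(1−6β+6β²)/12)(h‴k − k‴h) )`. -/
theorem cLie_eq_residue_formula (n : ℕ) (hn : 1 ≤ n) (β : ℤ)
    (D₁ D₂ : Matrix (Fin n) (Fin n) Rl × Rl) :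
    cLie n (Dop n β D₁) (Dop n β D₂) =
      Res ((∑ i, ∑ j, toK (D₁.1 i j) * fd (toK (D₂.1 j i)))
        + (((1 : ℂ) - 2 * (β : ℂ)) / 2) •
            (fd (fd (toK D₁.2)) * (∑ i, toK (D₂.1 i i))
              - fd (fd (toK D₂.2)) * (∑ i, toK (D₁.1 i i)))
        + (((n : ℂ) * (1 - 6 * (β : ℂ) + 6 * (β : ℂ) ^ 2)) / 12) •
            (fd (fd (fd (toK D₁.2))) * toK D₂.2
              - fd (fd (fd (toK D₂.2))) * toK D₁.2)) := by
  classical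
  -- a common support bound
  set T : Finset ℤ := ((Finset.univ : Finset (Fin n × Fin n)).biUnion
      (fun p => (D₁.1 p.1 p.2).coeff.support ∪ (D₂.1 p.1 p.2).coeff.support))
      ∪ D₁.2.coeff.support ∪ D₂.2.coeff.support with hT
  set N : ℤ := ((T.sup fun x => x.natAbs : ℕ) : ℤ) with hNdef
  have hN : 0 ≤ N := by positivity
  have hbound : ∀ x ∈ T, -N ≤ x ∧ x ≤ N := by
    intro x hx
    have h1 : x.natAbs ≤ T.sup fun y => y.natAbs := Finset.le_sup hx
    omega
  have ha : ∀ i j q, q < -N ∨ N < q → (D₁.1 i j).coeff q = 0 := by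
    intro i j q hq
    by_contra hne
    have hmem : q ∈ T := by
      rw [hT]
      refine Finset.mem_union_left _ (Finset.mem_union_left _ ?_)
      exact Finset.mem_biUnion.mpr ⟨(i, j), Finset.mem_univ _,
        Finset.mem_union_left _ (Finsupp.mem_support_iff.mpr hne)⟩
    rcases hbound q hmem with ⟨h1, h2⟩
    omega
  have hb : ∀ i j q, q < -N ∨ N < q → (D₂.1 i j).coeff q = 0 := by
    intro i j q hq
    by_contra hne
    have hmem : q ∈ T := by
      rw [hT]
      refine Finset.mem_union_left _ (Finset.mem_union_left _ ?_)
      exact Finset.mem_biUnion.mpr ⟨(i, j), Finset.mem_univ _,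
        Finset.mem_union_right _ (Finsupp.mem_support_iff.mpr hne)⟩
    rcases hbound q hmem with ⟨h1, h2⟩
    omega
  have hh : ∀ q, q < -N ∨ N < q → D₁.2.coeff q = 0 := by
    intro q hq
    by_contra hne
    have hmem : q ∈ T := by
      rw [hT]
      exact Finset.mem_union_left _
        (Finset.mem_union_right _ (Finsupp.mem_support_iff.mpr hne))
    rcases hbound q hmem with ⟨h1, h2⟩
    omega
  have hk : ∀ q, q < -N ∨ N < q → D₂.2.coeff q = 0 := by
    intro q hq
    by_contra hne
    have hmem : q ∈ T := by
      rw [hT]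
      exact Finset.mem_union_right _ (Finsupp.mem_support_iff.mpr hne)
    rcases hbound q hmem with ⟨h1, h2⟩
    omega
  set M : ℤ := N + 10 with hMdef
  -- support hypotheses in coefficient form
  have ha1 : ∀ i j q, (toK (D₁.1 i j)).coeff q ≠ 0 → q ∈ Finset.Icc (-M) M := by
    intro i j q hne
    rw [Finset.mem_Icc]
    by_contra hcon
    exact hne (by rw [toK_coeff]; exact ha i j q (by omega))
  have ha2 : ∀ q, (toK D₁.2).coeff q ≠ 0 → q ∈ Finset.Icc (-M) M := by
    intro q hne
    rw [Finset.mem_Icc]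
    by_contra hcon
    exact hne (by rw [toK_coeff]; exact hh q (by omega))
  have ha3 : ∀ q, (fd (toK D₁.2)).coeff q ≠ 0 → q ∈ Finset.Icc (-M) M := by
    intro q hne
    rw [Finset.mem_Icc]
    by_contra hcon
    exact hne (by rw [fd_coeff, toK_coeff, hh (q + 1) (by omega), mul_zero])
  have hb1 : ∀ i j q, (toK (D₂.1 i j)).coeff q ≠ 0 → q ∈ Finset.Icc (-M) M := by
    intro i j q hne
    rw [Finset.mem_Icc]
    by_contra hcon
    exact hne (by rw [toK_coeff]; exact hb i j q (by omega))
  have hb2 : ∀ q, (toK D₂.2).coeff q ≠ 0 → q ∈ Finset.Icc (-M) M := by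
    intro q hne
    rw [Finset.mem_Icc]
    by_contra hcon
    exact hne (by rw [toK_coeff]; exact hk q (by omega))
  have hb3 : ∀ q, (fd (toK D₂.2)).coeff q ≠ 0 → q ∈ Finset.Icc (-M) M := by
    intro q hne
    rw [Finset.mem_Icc]
    by_contra hcon
    exact hne (by rw [fd_coeff, toK_coeff, hk (q + 1) (by omega), mul_zero])
  rw [step1 n β D₁ D₂ M ha1 ha2 ha3 hb1 hb2 hb3]
  rw [Finset.sum_congr rfl fun m (_ : m ∈ Finset.Icc (-(M + 1)) (-1)) => Finset.sum_sub_distrib _ _,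
    Finset.sum_sub_distrib, stageAB n β M _ _ _ _, stageAB n β M _ _ _ _,
    ← Finset.sum_sub_distrib]
  rw [stageC n β N M hN (by omega) _ _ _ _ ha hb hh hk]
  rw [step2 n β N M hN (by omega) D₁ D₂ ha hb hh hk]

end
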